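/- arXiv:2410.21121 — 3 statements merged into one kernel-verified Lean document; each statement's English description precedes it below -/
import Mathlib

section
/- Let $R$ be a finitely generated unital associative algebra and $M$ a finitely generated left $R$-module with Gelfand–Kirillov dimension strictly less than $1$. Then $M$ is finite-dimensional as a vector space. -/
/-- `CfilM C M0 m` is the subspace `C^m M0`: the span of all products `r • v`
with `r` in the span of products of (at most, since `1 ∈ C`) `m` elements of `C`
and `v ∈ M0`. -/
noncomputable def CfilM {k R M : Type*} [Field k] [Ring R] [Algebra k R]
    [AddCommGroup M] [Module k M] [Module R M] [IsScalarTower k R M]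
    (C : Submodule k R) (M0 : Submodule k M) (m : ℕ) : Submodule k M :=
  Submodule.span k {x : M | ∃ r ∈ (C ^ m : Submodule k R), ∃ v ∈ M0, x = r • v}

/-- The Gelfand–Kirillov dimension of `M` computed from the generating
subspaces `C` and `M0`, as `limsup_m log (dim C^m M0) / log m`. -/
noncomputable def GKdim {k R M : Type*} [Field k] [Ring R] [Algebra k R]
    [AddCommGroup M] [Module k M] [Module R M] [IsScalarTower k R M]
    (C : Submodule k R) (M0 : Submodule k M) : EReal :=
  Filter.atTop.limsup (fun m : ℕ =>
    ((Real.log (Module.finrank k (CfilM C M0 m)) / Real.log m : ℝ) : EReal))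

section
variable {k R M : Type*} [Field k] [Ring R] [Algebra k R]
    [AddCommGroup M] [Module k M] [Module R M] [IsScalarTower k R M]
    (C : Submodule k R) (M0 : Submodule k M)

lemma smul_mem_CfilM {r : R} {v : M} {m : ℕ} (hr : r ∈ (C ^ m : Submodule k R))
    (hv : v ∈ M0) : r • v ∈ CfilM C M0 m :=
  Submodule.subset_span ⟨r, hr, v, hv, rfl⟩

lemma CfilM_fd [FiniteDimensional k C] [FiniteDimensional k M0] (m : ℕ) :
    FiniteDimensional k (CfilM C M0 m) := by
  obtain ⟨s, hs⟩ := ((Submodule.fg_iff_finiteDimensional C).2 ‹_›).pow m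
  obtain ⟨t, ht⟩ := (Submodule.fg_iff_finiteDimensional M0).2 ‹_›
  have hle : CfilM C M0 m ≤ Submodule.span k (Set.image2 (· • ·) (s : Set R) (t : Set M)) := by
    rw [CfilM, Submodule.span_le]
    rintro x ⟨r, hr, v, hv, rfl⟩
    rw [← hs] at hr; rw [← ht] at hv
    induction hr using Submodule.span_induction with
    | mem r hrs =>
      induction hv using Submodule.span_induction with
      | mem v hvt => exact Submodule.subset_span ⟨r, hrs, v, hvt, rfl⟩
      | zero => simpa using Submodule.zero_mem _
      | add v w _ _ hv hw => rw [smul_add]; exact Submodule.add_mem _ hv hw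
      | smul a v _ hv => rw [smul_comm]; exact Submodule.smul_mem _ a hv
    | zero => simpa using Submodule.zero_mem _
    | add r r' _ _ h1 h2 => rw [add_smul]; exact Submodule.add_mem _ h1 h2
    | smul a r _ h1 => rw [smul_assoc]; exact Submodule.smul_mem _ a h1
  have : FiniteDimensional k (Submodule.span k (Set.image2 (· • ·) (s : Set R) (t : Set M))) :=
    FiniteDimensional.span_of_finite k ((s.finite_toSet.image2 _ t.finite_toSet))
  exact Submodule.finiteDimensional_of_le hle

variable (hC1 : (1 : R) ∈ C)
include hC1

lemma one_mem_Cpow (m : ℕ) : (1 : R) ∈ (C ^ m : Submodule k R) := by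
  induction m with
  | zero => rw [pow_zero]; exact Submodule.one_le.1 le_rfl
  | succ n ih => rw [pow_succ]; simpa using Submodule.mul_mem_mul ih hC1

lemma CfilM_mono (m : ℕ) : CfilM C M0 m ≤ CfilM C M0 (m + 1) := by
  rw [CfilM, Submodule.span_le]
  rintro x ⟨r, hr, v, hv, rfl⟩
  refine smul_mem_CfilM C M0 ?_ hv
  rw [pow_succ']
  simpa using Submodule.mul_mem_mul hC1 hr

lemma smul_CfilM {c : R} (hc : c ∈ C) {x : M} {m : ℕ} (hx : x ∈ CfilM C M0 m) :
    c • x ∈ CfilM C M0 (m + 1) := by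
  induction hx using Submodule.span_induction with
  | mem x hxm =>
    obtain ⟨r, hr, v, hv, rfl⟩ := hxm
    rw [smul_smul]
    refine smul_mem_CfilM C M0 ?_ hv
    rw [pow_succ']
    exact Submodule.mul_mem_mul hc hr
  | zero => simpa using Submodule.zero_mem _
  | add y z _ _ h1 h2 => rw [smul_add]; exact Submodule.add_mem _ h1 h2
  | smul a y _ h1 => rw [smul_comm]; exact Submodule.smul_mem _ a h1

end

theorem stmt2 {k R M : Type*} [Field k] [Ring R] [Algebra k R]
    [AddCommGroup M] [Module k M] [Module R M] [IsScalarTower k R M]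
    (C : Submodule k R) (hC1 : (1 : R) ∈ C) (hCfd : FiniteDimensional k C)
    (hCgen : Algebra.adjoin k (C : Set R) = ⊤)
    (M0 : Submodule k M) (hM0fd : FiniteDimensional k M0)
    (hM0gen : Submodule.span R (M0 : Set M) = ⊤)
    (hGK : GKdim C M0 < 1) :
    FiniteDimensional k M := by
  by_cases hstab : ∃ m, CfilM C M0 m = CfilM C M0 (m + 1)
  · obtain ⟨m, hm⟩ := hstab
    set N := CfilM C M0 m with hN
    have hsmul : ∀ r : R, ∀ x ∈ N, r • x ∈ N := by
      intro r
      have hr : r ∈ Algebra.adjoin k (C : Set R) := by rw [hCgen]; trivial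
      induction hr using Algebra.adjoin_induction with
      | mem c hc =>
        intro x hx
        have := smul_CfilM C M0 hC1 hc hx
        rwa [← hm] at this
      | algebraMap a =>
        intro x hx
        rw [algebraMap_smul]; exact N.smul_mem a hx
      | add r s _ _ h1 h2 =>
        intro x hx; rw [add_smul]; exact N.add_mem (h1 x hx) (h2 x hx)
      | mul r s _ _ h1 h2 =>
        intro x hx; rw [mul_smul]; exact h1 _ (h2 x hx)
    let N' : Submodule R M :=
      { carrier := N
        add_mem' := fun h1 h2 => N.add_mem h1 h2
        zero_mem' := N.zero_mem
        smul_mem' := fun r {x} hx => hsmul r x hx }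
    have hM0N : (M0 : Set M) ⊆ N' := by
      intro v hv
      have : (1 : R) • v ∈ N := smul_mem_CfilM C M0 (one_mem_Cpow C hC1 m) hv
      rwa [one_smul] at this
    have hN'top : N' = ⊤ := eq_top_iff.2 (hM0gen ▸ Submodule.span_le.2 hM0N)
    have hNtop : N = ⊤ := by
      rw [Submodule.eq_top_iff']
      intro x
      have : x ∈ N' := hN'top ▸ Submodule.mem_top
      exact this
    haveI : FiniteDimensional k N := CfilM_fd C M0 m
    rw [hNtop] at this
    exact Module.Finite.equiv (Submodule.topEquiv (R := k) (M := M))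
  · push_neg at hstab
    exfalso
    have hrank : ∀ m, m ≤ Module.finrank k (CfilM C M0 m) := by
      intro m; induction m with
      | zero => exact Nat.zero_le _
      | succ n ih =>
        have hlt : CfilM C M0 n < CfilM C M0 (n + 1) :=
          lt_of_le_of_ne (CfilM_mono C M0 hC1 n) (hstab n)
        haveI : FiniteDimensional k (CfilM C M0 (n + 1)) := CfilM_fd C M0 (n + 1)
        have := Submodule.finrank_lt_finrank_of_lt hlt
        omega
    have h1le : (1 : EReal) ≤ GKdim C M0 := by
      refine Filter.le_limsup_of_frequently_le' ?_
      refine (Filter.eventually_atTop.2 ⟨2, ?_⟩).frequently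
      intro m hm
      have hm1 : (1 : ℝ) < (m : ℝ) := by exact_mod_cast (by omega : 1 < m)
      have hlogm : 0 < Real.log m := Real.log_pos hm1
      have hd : (m : ℝ) ≤ (Module.finrank k (CfilM C M0 m) : ℝ) := by
        exact_mod_cast hrank m
      have hlog : Real.log m ≤ Real.log (Module.finrank k (CfilM C M0 m)) :=
        Real.log_le_log (by linarith) hd
      have : (1 : ℝ) ≤ Real.log (Module.finrank k (CfilM C M0 m)) / Real.log m :=
        (one_le_div hlogm).2 hlog
      exact_mod_cast EReal.coe_le_coe_iff.2 this
    exact absurd hGK (not_lt.2 h1le)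
end

section
/- Let $\mathcal{L}_+ = \mathfrak{m}\,\mathrm{Der}(\Bbbk[X_1,\dots,X_n])$ be the Lie algebra of polynomial vector fields vanishing at the origin, graded as $\mathcal{L}_+ = \bigoplus_{d\geq 0} \mathcal{L}_d$ where $\mathcal{L}_d$ is spanned by $X^k \partial/\partial X_i$ with $|k| = d+1$. If $n > 1$, then the subalgebra $\mathcal{L}_{++} = \bigoplus_{k \geq 2} \mathcal{L}_k$ is generated as a Lie algebra by $\mathcal{L}_1$; consequently $\mathcal{L}_0 \oplus \mathcal{L}_1$ generates $\mathcal{L}_+$ as a Lie algebra. -/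
open MvPolynomial

variable (k : Type*) [Field k] [CharZero k] (n : ℕ)

/-- The maximal ideal `𝔪 = (X₁, …, Xₙ)` at the origin. -/
noncomputable def mIdeal : Ideal (MvPolynomial (Fin n) k) :=
  Ideal.span (Set.range (X : Fin n → MvPolynomial (Fin n) k))

/-- The homogeneous component `ℒ_d` of the Lie algebra of vector fields:
derivations whose coefficients (the values on the `Xᵢ`) are homogeneous of
degree `d + 1`. -/
noncomputable def Lgrade (d : ℕ) :
    Submodule k (Derivation k (MvPolynomial (Fin n) k) (MvPolynomial (Fin n) k)) where
  carrier := {D | ∀ i, D (X i) ∈ homogeneousSubmodule (Fin n) k (d + 1)}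
  add_mem' := by
    intro a b ha hb i
    simpa using add_mem (ha i) (hb i)
  zero_mem' := by
    intro i; simp
  smul_mem' := by
    intro c D hD i
    simpa using Submodule.smul_mem _ c (hD i)

section Aux

set_option linter.unusedSectionVars false

variable {k n}

/-- The vector field `p ∂/∂Xᵢ`. -/
noncomputable def vf (p : MvPolynomial (Fin n) k) (i : Fin n) :
    Derivation k (MvPolynomial (Fin n) k) (MvPolynomial (Fin n) k) := p • pderiv i

lemma vf_apply (p f : MvPolynomial (Fin n) k) (i : Fin n) :
    vf p i f = p * pderiv i f := rfl

lemma vf_sub (p q : MvPolynomial (Fin n) k) (i : Fin n) : vf (p - q) i = vf p i - vf q i := by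
  ext f
  simp [vf_apply, sub_mul]

lemma vf_ksmul (c : k) (p : MvPolynomial (Fin n) k) (i : Fin n) : vf (c • p) i = c • vf p i :=
  smul_assoc c p _

lemma vf_monomial_smul (m : Fin n →₀ ℕ) (c : k) (i : Fin n) :
    vf (monomial m c) i = c • vf (monomial m 1) i := by
  rw [← vf_ksmul, smul_monomial, smul_eq_mul, mul_one]

lemma deriv_sum_apply {ι : Type*} (s : Finset ι)
    (f : ι → Derivation k (MvPolynomial (Fin n) k) (MvPolynomial (Fin n) k))
    (a : MvPolynomial (Fin n) k) : (∑ i ∈ s, f i) a = ∑ i ∈ s, f i a := by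
  induction s using Finset.cons_induction with
  | empty => simp
  | cons i s hi ih => simp [Derivation.add_apply, ih]

lemma derivation_eq_sum (D : Derivation k (MvPolynomial (Fin n) k) (MvPolynomial (Fin n) k)) :
    D = ∑ i, vf (D (X i)) i := by
  apply derivation_ext
  intro i
  rw [deriv_sum_apply, Finset.sum_eq_single i]
  · simp [vf_apply]
  · intro j _ hj
    rw [vf_apply, pderiv_X_of_ne (Ne.symm hj), mul_zero]
  · simp

lemma vf_bracket (p q : MvPolynomial (Fin n) k) (i j : Fin n) :
    ⁅vf p i, vf q j⁆ = vf (p * pderiv i q) j - vf (q * pderiv j p) i := by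
  apply derivation_ext
  intro l
  rw [Derivation.commutator_apply, Derivation.sub_apply]
  simp only [vf_apply]
  classical
  by_cases hil : i = l <;> by_cases hjl : j = l <;>
    simp [pderiv_mul, pderiv_X, Pi.single_apply, hil, hjl]

lemma mono_mul_pderiv (a b m : Fin n →₀ ℕ) (l : Fin n) (hab : a + b = m + Finsupp.single l 1) :
    (monomial a 1 : MvPolynomial (Fin n) k) * pderiv l (monomial b 1) = monomial m ((b l : k)) := by
  rw [pderiv_monomial, monomial_mul]
  simp only [one_mul]
  rcases Nat.eq_zero_or_pos (b l) with h | h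
  · rw [h]; simp
  · congr 1
    have hle : Finsupp.single l 1 ≤ b := by
      rw [Finsupp.single_le_iff]; exact h
    rw [← add_tsub_assoc_of_le hle, hab, add_tsub_cancel_right]

lemma degree_add' (a b : Fin n →₀ ℕ) : (a + b).degree = a.degree + b.degree := by
  simp [Finsupp.degree_eq_weight_one, map_add]

lemma degree_single' (i : Fin n) (e : ℕ) : (Finsupp.single i e).degree = e := by
  simp [Finsupp.degree_eq_weight_one, Finsupp.weight_apply, Finsupp.sum_single_index]

lemma degree_mono' {a b : Fin n →₀ ℕ} (h : a ≤ b) : a.degree ≤ b.degree := by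
  obtain ⟨c, rfl⟩ := le_iff_exists_add.mp h
  rw [degree_add']; omega

lemma degree_sub_single {m : Fin n →₀ ℕ} {j : Fin n} (hj : m j ≠ 0) :
    (m - Finsupp.single j 1).degree + 1 = m.degree := by
  have hle : Finsupp.single j 1 ≤ m :=
    Finsupp.single_le_iff.mpr (Nat.one_le_iff_ne_zero.mpr hj)
  have h1 : (m - Finsupp.single j 1) + Finsupp.single j 1 = m := tsub_add_cancel_of_le hle
  have h2 := congrArg Finsupp.degree h1
  rw [degree_add', degree_single'] at h2
  omega

lemma vf_monomial_mem_Lgrade {m : Fin n →₀ ℕ} {d : ℕ} (hm : m.degree = d + 1) (c : k)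
    (i : Fin n) : vf (monomial m c) i ∈ Lgrade k n d := by
  intro l
  rw [vf_apply]
  by_cases hil : i = l
  · subst hil
    rw [pderiv_X_self, mul_one]
    exact (mem_homogeneousSubmodule _ _).mpr (isHomogeneous_monomial c hm)
  · rw [pderiv_X_of_ne (fun h => hil h.symm), mul_zero]
    exact Submodule.zero_mem _

lemma bracket_same (i : Fin n) (m a b : Fin n →₀ ℕ) (hab : a + b = m + Finsupp.single i 1) :
    ⁅vf (monomial a (1 : k)) i, vf (monomial b (1 : k)) i⁆
      = ((b i : k) - (a i : k)) • vf (monomial m (1 : k)) i := by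
  rw [vf_bracket, mono_mul_pderiv a b m i hab,
    mono_mul_pderiv b a m i (by rw [add_comm]; exact hab), ← vf_sub, ← map_sub,
    vf_monomial_smul]

lemma split_mem
    (S : LieSubalgebra k (Derivation k (MvPolynomial (Fin n) k) (MvPolynomial (Fin n) k)))
    (hS : ∀ E ∈ Lgrade k n 1, E ∈ S)
    (i : Fin n) (m a b : Fin n →₀ ℕ) (hab : a + b = m + Finsupp.single i 1)
    (ha : a.degree = 2) (hne : a i ≠ b i)
    (hb : vf (monomial b (1 : k)) i ∈ S) :
    vf (monomial m (1 : k)) i ∈ S := by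
  have hmem : vf (monomial a (1 : k)) i ∈ S := hS _ (vf_monomial_mem_Lgrade (by omega) 1 i)
  have hbr := S.lie_mem hmem hb
  rw [bracket_same i m a b hab] at hbr
  have hc : ((b i : k) - (a i : k)) ≠ 0 := by
    rw [sub_ne_zero]
    exact fun h => hne (Nat.cast_injective h).symm
  have h2 := S.smul_mem ((b i : k) - (a i : k))⁻¹ hbr
  rwa [smul_smul, inv_mul_cancel₀ hc, one_smul] at h2

lemma key (hn : 1 < n) (t : ℕ) :
    ∀ (m : Fin n →₀ ℕ) (i : Fin n), 3 ≤ m.degree → m.degree = t →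
      vf (monomial m (1 : k)) i ∈
        LieSubalgebra.lieSpan k
          (Derivation k (MvPolynomial (Fin n) k) (MvPolynomial (Fin n) k))
          (Lgrade k n 1 : Set _) := by
  set S := LieSubalgebra.lieSpan k
      (Derivation k (MvPolynomial (Fin n) k) (MvPolynomial (Fin n) k))
      (Lgrade k n 1 : Set _) with hSdef
  have hS : ∀ E ∈ Lgrade k n 1, E ∈ S := fun E hE => LieSubalgebra.subset_lieSpan hE
  have base2 : ∀ (b : Fin n →₀ ℕ), b.degree = 2 → ∀ j, vf (monomial b (1 : k)) j ∈ S :=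
    fun b hb j => hS _ (vf_monomial_mem_Lgrade (by omega : b.degree = 1 + 1) 1 j)
  induction t using Nat.strong_induction_on with
  | _ t IH =>
    intro m i h3 hmt
    have hlower : ∀ (b : Fin n →₀ ℕ), b.degree + 1 = t → ∀ j,
        vf (monomial b (1 : k)) j ∈ S := by
      intro b hb j
      rcases Nat.lt_or_ge b.degree 3 with h | h
      · exact base2 b (by omega) j
      · exact IH b.degree (by omega) b j h rfl
    rcases Nat.eq_zero_or_pos (m i) with hmi | hmi
    · -- m i = 0
      have hm0 : m ≠ 0 := by
        intro h
        rw [h, map_zero] at h3; omega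
      obtain ⟨j, hj⟩ : ∃ j, m j ≠ 0 := by
        by_contra hc
        push_neg at hc
        exact hm0 (Finsupp.ext fun a => hc a)
      have hji : j ≠ i := fun h => hj (h ▸ hmi)
      have hle : Finsupp.single j 1 ≤ m :=
        Finsupp.single_le_iff.mpr (Nat.one_le_iff_ne_zero.mpr hj)
      apply split_mem S hS i m (Finsupp.single i 1 + Finsupp.single j 1) (m - Finsupp.single j 1)
      · rw [add_assoc, add_tsub_cancel_of_le hle, add_comm]
      · rw [degree_add', degree_single', degree_single']
      · rw [Finsupp.add_apply, Finsupp.single_eq_same, Finsupp.single_eq_of_ne' hji,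
          Finsupp.tsub_apply, Finsupp.single_eq_of_ne' hji, hmi]
        simp
      · exact hlower _ (by rw [degree_sub_single hj, hmt]) i
    · rcases Nat.decEq (m i) 3 with hmi3 | hmi3
      · -- m i ≥ 1, m i ≠ 3
        have hmi' : m i ≠ 0 := by omega
        have hle : Finsupp.single i 1 ≤ m := Finsupp.single_le_iff.mpr hmi
        apply split_mem S hS i m (Finsupp.single i 2) (m - Finsupp.single i 1)
        · rw [show (2 : ℕ) = 1 + 1 from rfl, Finsupp.single_add, add_assoc,
            add_tsub_cancel_of_le hle, add_comm]
        · rw [degree_single']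
        · rw [Finsupp.single_eq_same, Finsupp.tsub_apply, Finsupp.single_eq_same]
          omega
        · exact hlower _ (by rw [degree_sub_single hmi', hmt]) i
      · -- m i = 3
        by_cases hex : ∃ j, j ≠ i ∧ m j ≠ 0
        · obtain ⟨j, hji, hj⟩ := hex
          have hle : Finsupp.single j 1 ≤ m :=
            Finsupp.single_le_iff.mpr (Nat.one_le_iff_ne_zero.mpr hj)
          apply split_mem S hS i m (Finsupp.single i 1 + Finsupp.single j 1)
            (m - Finsupp.single j 1)
          · rw [add_assoc, add_tsub_cancel_of_le hle, add_comm]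
          · rw [degree_add', degree_single', degree_single']
          · rw [Finsupp.add_apply, Finsupp.single_eq_same, Finsupp.single_eq_of_ne' hji,
              Finsupp.tsub_apply, Finsupp.single_eq_of_ne' hji, hmi3]
            simp
          · exact hlower _ (by rw [degree_sub_single hj, hmt]) i
        · -- m = single i 3
          push_neg at hex
          have hmeq : m = Finsupp.single i 3 := by
            ext a
            rcases eq_or_ne a i with rfl | ha
            · rw [Finsupp.single_eq_same, hmi3]
            · rw [Finsupp.single_eq_of_ne' (Ne.symm ha), hex a ha]
          subst hmeq
          obtain ⟨j, hji⟩ : ∃ j : Fin n, j ≠ i :=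
            Fintype.exists_ne_of_one_lt_card (by simpa using hn) i
          -- step 1 : X_i² X_j ∂_j ∈ S
          have h1 : vf (monomial (Finsupp.single i 2 + Finsupp.single j 1) (1 : k)) j ∈ S := by
            apply split_mem S hS j _ (Finsupp.single j 2) (Finsupp.single i 2)
            · rw [add_assoc, ← Finsupp.single_add, add_comm]
            · rw [degree_single']
            · rw [Finsupp.single_eq_same, Finsupp.single_eq_of_ne' (Ne.symm hji)]
              omega
            · exact base2 _ (by rw [degree_single']) j
          -- step 2 : the mixed bracket
          have hb1 : vf (monomial (Finsupp.single i 2) (1 : k)) j ∈ S :=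
            base2 _ (by rw [degree_single']) j
          have hb2 : vf (monomial (Finsupp.single i 1 + Finsupp.single j 1) (1 : k)) i ∈ S :=
            base2 _ (by rw [degree_add', degree_single', degree_single']) i
          have hcomp : ⁅vf (monomial (Finsupp.single i 2) (1 : k)) j,
              vf (monomial (Finsupp.single i 1 + Finsupp.single j 1) (1 : k)) i⁆
              = vf (monomial (Finsupp.single i 3) (1 : k)) i
                - (2 : k) • vf (monomial (Finsupp.single i 2 + Finsupp.single j 1) (1 : k)) j := by
            rw [vf_bracket,
              mono_mul_pderiv (Finsupp.single i 2)
                (Finsupp.single i 1 + Finsupp.single j 1) (Finsupp.single i 3) j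
                (by rw [← add_assoc, ← Finsupp.single_add]),
              mono_mul_pderiv (Finsupp.single i 1 + Finsupp.single j 1)
                (Finsupp.single i 2) (Finsupp.single i 2 + Finsupp.single j 1) i
                (by abel),
              Finsupp.add_apply, Finsupp.single_eq_of_ne' (Ne.symm hji), Finsupp.single_eq_same,
              Finsupp.single_eq_same]
            norm_num
            rw [vf_monomial_smul]
          have hfin : vf (monomial (Finsupp.single i 3) (1 : k)) i
              = ⁅vf (monomial (Finsupp.single i 2) (1 : k)) j,
                  vf (monomial (Finsupp.single i 1 + Finsupp.single j 1) (1 : k)) i⁆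
                + (2 : k) • vf (monomial (Finsupp.single i 2 + Finsupp.single j 1) (1 : k)) j := by
            rw [hcomp, sub_add_cancel]
          rw [hfin]
          exact S.add_mem (S.lie_mem hb1 hb2) (S.smul_mem _ h1)

lemma vf_mem_of_support
    (S : LieSubalgebra k (Derivation k (MvPolynomial (Fin n) k) (MvPolynomial (Fin n) k)))
    (p : MvPolynomial (Fin n) k) (i : Fin n)
    (h : ∀ m ∈ p.support, vf (monomial m (coeff m p)) i ∈ S) : vf p i ∈ S := by
  have hp : vf p i = ∑ m ∈ p.support, vf (monomial m (coeff m p)) i := by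
    conv_lhs => rw [← support_sum_monomial_coeff p]
    show (∑ m ∈ p.support, monomial m (coeff m p)) • _ = _
    rw [Finset.sum_smul]
    rfl
  rw [hp]
  exact sum_mem h

lemma mem_pow3_degree {p : MvPolynomial (Fin n) k} (hp : p ∈ (mIdeal k n) ^ 3) :
    ∀ m ∈ p.support, 3 ≤ m.degree := by
  set J : ℕ → Ideal (MvPolynomial (Fin n) k) := fun t =>
    Ideal.span ((fun s => monomial s (1 : k)) '' {s | t ≤ s.degree}) with hJ
  have hJ1 : mIdeal k n ≤ J 1 := by
    rw [mIdeal, Ideal.span_le]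
    rintro _ ⟨i, rfl⟩
    exact Ideal.subset_span ⟨Finsupp.single i 1, by simp [degree_single'], rfl⟩
  have hmul : ∀ s t : ℕ, J s * J t ≤ J (s + t) := by
    intro s t
    rw [hJ, Ideal.span_mul_span']
    apply Ideal.span_le.mpr
    rintro _ ⟨x, ⟨sx, hsx, rfl⟩, y, ⟨sy, hsy, rfl⟩, rfl⟩
    apply Ideal.subset_span
    refine ⟨sx + sy, ?_, by simp [monomial_mul]⟩
    rw [Set.mem_setOf_eq, degree_add']
    exact add_le_add hsx hsy
  have h3 : (mIdeal k n) ^ 3 ≤ J 3 := by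
    have e1 : (mIdeal k n) ^ 3 = mIdeal k n * mIdeal k n * mIdeal k n := by
      rw [pow_succ, sq]
    rw [e1]
    calc mIdeal k n * mIdeal k n * mIdeal k n
        ≤ J 1 * J 1 * J 1 :=
          Ideal.mul_mono (Ideal.mul_mono hJ1 hJ1) hJ1
      _ ≤ J 2 * J 1 := Ideal.mul_mono_left (hmul 1 1)
      _ ≤ J 3 := hmul 2 1
  intro m hm
  obtain ⟨s, hs, hsle⟩ := mem_ideal_span_monomial_image.mp (h3 hp) m hm
  exact le_trans hs (degree_mono' hsle)

lemma mem_mIdeal_iff {p : MvPolynomial (Fin n) k} :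
    p ∈ mIdeal k n ↔ ∀ m ∈ p.support, m ≠ 0 := by
  rw [mIdeal, ← Set.image_univ, mem_ideal_span_X_image]
  apply forall₂_congr
  intro m _
  constructor
  · rintro ⟨i, _, hi⟩ h0
    rw [h0] at hi; simp at hi
  · intro h0
    by_contra hc
    push_neg at hc
    exact h0 (Finsupp.ext fun a => by simpa using hc a (Set.mem_univ a))

lemma homog_mem_mIdeal {p : MvPolynomial (Fin n) k} {d : ℕ}
    (hp : p ∈ homogeneousSubmodule (Fin n) k (d + 1)) : p ∈ mIdeal k n := by
  rw [mem_mIdeal_iff]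
  intro m hm h0
  have h1 := (mem_homogeneousSubmodule _ _).mp hp (mem_support_iff.mp hm)
  rw [h0] at h1
  simp at h1

lemma D_stable (D : Derivation k (MvPolynomial (Fin n) k) (MvPolynomial (Fin n) k))
    (hD : ∀ i, D (X i) ∈ mIdeal k n) {p : MvPolynomial (Fin n) k}
    (hp : p ∈ mIdeal k n) : D p ∈ mIdeal k n := by
  rw [mIdeal] at hp
  induction hp using Submodule.span_induction with
  | mem x hx =>
    obtain ⟨i, rfl⟩ := hx
    exact hD i
  | zero => rw [map_zero]; exact (mIdeal k n).zero_mem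
  | add x y hx hy ihx ihy => rw [map_add]; exact add_mem ihx ihy
  | smul r x hx ih =>
    rw [smul_eq_mul, Derivation.leibniz, smul_eq_mul, smul_eq_mul]
    refine add_mem (Ideal.mul_mem_left _ r ih) (Ideal.mul_mem_right _ _ ?_)
    rw [mIdeal]
    exact hx

/-- The set of vector fields vanishing at the origin, as a Lie subalgebra. -/
noncomputable def Lplus :
    LieSubalgebra k (Derivation k (MvPolynomial (Fin n) k) (MvPolynomial (Fin n) k)) where
  carrier := {D | ∀ i, D (X i) ∈ mIdeal k n}
  add_mem' := by
    intro a b ha hb i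
    rw [Derivation.add_apply]
    exact add_mem (ha i) (hb i)
  zero_mem' := by
    intro i
    show (0 : Derivation k (MvPolynomial (Fin n) k) (MvPolynomial (Fin n) k)) (X i) ∈ _
    have h0 : (0 : Derivation k (MvPolynomial (Fin n) k) (MvPolynomial (Fin n) k)) (X i) = 0 :=
      rfl
    rw [h0]
    exact (mIdeal k n).zero_mem
  smul_mem' := by
    intro c D hD i
    rw [Derivation.smul_apply, smul_eq_C_mul]
    exact Ideal.mul_mem_left _ _ (hD i)
  lie_mem' := by
    intro D1 D2 h1 h2 i
    rw [Derivation.commutator_apply]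
    exact sub_mem (D_stable D1 h1 (h2 i)) (D_stable D2 h2 (h1 i))

end Aux

/-- If `n > 1` then `ℒ₊₊ = ⨁_{d ≥ 2} ℒ_d` (the vector fields with coefficients in `𝔪³`)
is generated as a Lie algebra by `ℒ₁`; consequently `ℒ₀ ⊕ ℒ₁` generates
`ℒ₊` (the vector fields with coefficients in `𝔪`) as a Lie algebra. -/
theorem stmt6 (hn : 1 < n) :
    (∀ D : Derivation k (MvPolynomial (Fin n) k) (MvPolynomial (Fin n) k),
      (∀ i, D (X i) ∈ (mIdeal k n) ^ 3) →
        D ∈ LieSubalgebra.lieSpan k _ (Lgrade k n 1 : Set _)) ∧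
    ((LieSubalgebra.lieSpan k
        (Derivation k (MvPolynomial (Fin n) k) (MvPolynomial (Fin n) k))
        ((Lgrade k n 0 : Set _) ∪ (Lgrade k n 1 : Set _)) : Set _)
      = {D : Derivation k (MvPolynomial (Fin n) k) (MvPolynomial (Fin n) k) |
          ∀ i, D (X i) ∈ mIdeal k n}) := by
  constructor
  · intro D hD
    have hdec := derivation_eq_sum D
    rw [hdec]
    apply sum_mem
    intro i _
    apply vf_mem_of_support
    intro m hm
    rw [vf_monomial_smul]
    apply LieSubalgebra.smul_mem
    exact key hn m.degree m i (mem_pow3_degree (hD i) m hm) rfl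
  · ext D
    simp only [SetLike.mem_coe, Set.mem_setOf_eq]
    constructor
    · intro hD
      have hle : LieSubalgebra.lieSpan k
          (Derivation k (MvPolynomial (Fin n) k) (MvPolynomial (Fin n) k))
          ((Lgrade k n 0 : Set _) ∪ (Lgrade k n 1 : Set _)) ≤ Lplus := by
        rw [LieSubalgebra.lieSpan_le]
        rintro E (hE | hE) i
        · exact homog_mem_mIdeal (hE i)
        · exact homog_mem_mIdeal (hE i)
      exact hle hD
    · intro hD
      have hdec := derivation_eq_sum D
      rw [hdec]
      apply sum_mem
      intro i _
      apply vf_mem_of_support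
      intro m hm
      rw [vf_monomial_smul]
      apply LieSubalgebra.smul_mem
      have hm0 : m ≠ 0 := mem_mIdeal_iff.mp (hD i) m hm
      have hd1 : 1 ≤ m.degree := by
        rcases Nat.eq_zero_or_pos m.degree with h | h
        · exact absurd ((Finsupp.degree_eq_zero_iff m).mp h) hm0
        · exact h
      rcases Nat.decEq m.degree 1 with h1 | h1
      · rcases Nat.decEq m.degree 2 with h2 | h2
        · -- degree ≥ 3
          have h3 : 3 ≤ m.degree := by omega
          exact LieSubalgebra.lieSpan_mono Set.subset_union_right
            (key hn m.degree m i h3 rfl)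
        · exact LieSubalgebra.subset_lieSpan
            (Set.mem_union_right _ (vf_monomial_mem_Lgrade (by omega) 1 i))
      · exact LieSubalgebra.subset_lieSpan
          (Set.mem_union_left _ (vf_monomial_mem_Lgrade (by omega) 1 i))
end

section
/- Let $R$ be a commutative $\Bbbk$-algebra generated by elements $x_1,\dots,x_n$, and $M, N$ be $R$-modules. Then $D \in \mathrm{Hom}_{\Bbbk}(M,N)$ is a differential operator of order at most $s$ if and only if $\delta(x_1)^{m_1}\circ\cdots\circ\delta(x_n)^{m_n}(D) = 0$ for all multi-indices $m \in \mathbb{Z}_+^n$ with $|m| = s+1$. -/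
/-- The adjoint operator `δ(f) D = D ∘ f - f ∘ D` on `Hom_k(M, N)`, where `f`
acts by module multiplication. -/
noncomputable def delta {k R M N : Type*} [Field k] [CommRing R] [Algebra k R]
    [AddCommGroup M] [Module k M] [Module R M] [IsScalarTower k R M]
    [AddCommGroup N] [Module k N] [Module R N] [IsScalarTower k R N]
    (f : R) (D : M →ₗ[k] N) : M →ₗ[k] N :=
  D ∘ₗ ((LinearMap.lsmul R M f).restrictScalars k)
    - ((LinearMap.lsmul R N f).restrictScalars k) ∘ₗ D

/-- Grothendieck's inductive definition of differential operators: `D` has order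
at most `s` iff `δ(f) D` has order at most `s - 1` for all `f`, with the operators
of order at most `0` being the `R`-linear maps (`δ(f) D = 0` for all `f`). -/
def IsDiffLE {k R M N : Type*} [Field k] [CommRing R] [Algebra k R]
    [AddCommGroup M] [Module k M] [Module R M] [IsScalarTower k R M]
    [AddCommGroup N] [Module k N] [Module R N] [IsScalarTower k R N] :
    ℕ → (M →ₗ[k] N) → Prop
  | 0, D => ∀ f : R, delta f D = 0
  | s + 1, D => ∀ f : R, IsDiffLE (R := R) s (delta f D)

section Aux

variable {k R M N : Type*} [Field k] [CommRing R] [Algebra k R]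
    [AddCommGroup M] [Module k M] [Module R M] [IsScalarTower k R M]
    [AddCommGroup N] [Module k N] [Module R N] [IsScalarTower k R N]

lemma delta_apply (f : R) (D : M →ₗ[k] N) (m : M) :
    delta f D m = D (f • m) - f • D m := rfl

lemma delta_zero (f : R) : delta (M := M) (N := N) f (0 : M →ₗ[k] N) = 0 := by
  ext m; simp [delta_apply]

lemma delta_add (f : R) (D E : M →ₗ[k] N) :
    delta f (D + E) = delta f D + delta f E := by
  ext m; simp [delta_apply]; abel

lemma delta_add' (f g : R) (D : M →ₗ[k] N) :
    delta (f + g) D = delta f D + delta g D := by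
  ext m; simp [delta_apply, add_smul]; abel

lemma delta_algebraMap (c : k) (D : M →ₗ[k] N) :
    delta (algebraMap k R c) D = 0 := by
  ext m; simp [delta_apply, algebraMap_smul]

lemma delta_comm (f g : R) (D : M →ₗ[k] N) :
    delta f (delta g D) = delta g (delta f D) := by
  ext m
  simp only [delta_apply, map_sub, smul_sub]
  rw [smul_smul, smul_smul, mul_comm g f, smul_smul, smul_smul, mul_comm g f]
  abel

lemma delta_commL (h f : R) (E : M →ₗ[k] N) :
    delta h (((LinearMap.lsmul R N f).restrictScalars k) ∘ₗ E)
      = ((LinearMap.lsmul R N f).restrictScalars k) ∘ₗ delta h E := by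
  ext m
  simp only [delta_apply, LinearMap.comp_apply, LinearMap.restrictScalars_apply,
    LinearMap.lsmul_apply, smul_sub]
  rw [smul_smul, smul_smul, mul_comm h f]

lemma delta_commR (h g : R) (E : M →ₗ[k] N) :
    delta h (E ∘ₗ ((LinearMap.lsmul R M g).restrictScalars k))
      = (delta h E) ∘ₗ ((LinearMap.lsmul R M g).restrictScalars k) := by
  ext m
  simp only [delta_apply, LinearMap.comp_apply, LinearMap.restrictScalars_apply,
    LinearMap.lsmul_apply]
  rw [smul_smul, smul_smul, mul_comm h g]

lemma delta_mul (f g : R) (D : M →ₗ[k] N) :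
    delta (f * g) D = ((LinearMap.lsmul R N f).restrictScalars k) ∘ₗ (delta g D)
      + (delta f D) ∘ₗ ((LinearMap.lsmul R M g).restrictScalars k) := by
  ext m
  simp only [delta_apply, LinearMap.add_apply, LinearMap.comp_apply,
    LinearMap.restrictScalars_apply, LinearMap.lsmul_apply, smul_sub, mul_smul]
  abel

variable {n : ℕ} (x : Fin n → R)

/-- Composition of `delta (x i)` along a list of indices. -/
noncomputable def dFold (l : List (Fin n)) (D : M →ₗ[k] N) : M →ₗ[k] N :=
  l.foldr (fun i E => delta (x i) E) D

@[simp] lemma dFold_nil (D : M →ₗ[k] N) : dFold x [] D = D := rfl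

@[simp] lemma dFold_cons (i : Fin n) (l : List (Fin n)) (D : M →ₗ[k] N) :
    dFold x (i :: l) D = delta (x i) (dFold x l D) := rfl

lemma dFold_append (l₁ l₂ : List (Fin n)) (D : M →ₗ[k] N) :
    dFold x (l₁ ++ l₂) D = dFold x l₁ (dFold x l₂ D) := by
  simp [dFold, List.foldr_append]

@[simp] lemma dFold_zero (l : List (Fin n)) : dFold x l (0 : M →ₗ[k] N) = 0 := by
  induction l with
  | nil => rfl
  | cons a t ih => simp [ih, delta_zero]

lemma dFold_add (l : List (Fin n)) (D E : M →ₗ[k] N) :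
    dFold x l (D + E) = dFold x l D + dFold x l E := by
  induction l with
  | nil => rfl
  | cons a t ih => simp [ih, delta_add]

lemma dFold_commL (l : List (Fin n)) (f : R) (E : M →ₗ[k] N) :
    dFold x l (((LinearMap.lsmul R N f).restrictScalars k) ∘ₗ E)
      = ((LinearMap.lsmul R N f).restrictScalars k) ∘ₗ dFold x l E := by
  induction l with
  | nil => rfl
  | cons a t ih => simp [ih, delta_commL]

lemma dFold_commR (l : List (Fin n)) (g : R) (E : M →ₗ[k] N) :
    dFold x l (E ∘ₗ ((LinearMap.lsmul R M g).restrictScalars k))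
      = (dFold x l E) ∘ₗ ((LinearMap.lsmul R M g).restrictScalars k) := by
  induction l with
  | nil => rfl
  | cons a t ih => simp [ih, delta_commR]

lemma dFold_perm {l₁ l₂ : List (Fin n)} (h : l₁.Perm l₂) (D : M →ₗ[k] N) :
    dFold x l₁ D = dFold x l₂ D := by
  induction h with
  | nil => rfl
  | cons a _ ih => simp [ih]
  | swap a b t => simp [delta_comm]
  | trans _ _ ih₁ ih₂ => rw [ih₁, ih₂]

/-- `Van s D` : every composition of `s` of the `delta (x i)` kills `D`. -/
def Van (s : ℕ) (D : M →ₗ[k] N) : Prop :=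
  ∀ l : List (Fin n), l.length = s → dFold x l D = 0

lemma van_zero_iff (D : M →ₗ[k] N) : Van x 0 D ↔ D = 0 := by
  constructor
  · intro h; simpa using h [] rfl
  · rintro rfl l _; simp

lemma van_add (s : ℕ) {D E : M →ₗ[k] N} (hD : Van x s D) (hE : Van x s E) :
    Van x s (D + E) := fun l hl => by
  rw [dFold_add, hD l hl, hE l hl, add_zero]

/-- Key step: `delta f` lowers the vanishing order, for every `f`, given that
`R` is generated by the `x i`. -/
lemma van_delta (hx : Algebra.adjoin k (Set.range x) = ⊤) (f : R) :
    ∀ (s : ℕ) (D : M →ₗ[k] N), Van x (s + 1) D → Van x s (delta f D) := by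
  have hf : f ∈ Algebra.adjoin k (Set.range x) := hx ▸ Algebra.mem_top
  induction hf using Algebra.adjoin_induction with
  | mem g hg =>
    obtain ⟨i, rfl⟩ := hg
    intro s D hD l hl
    have : dFold x l (delta (x i) D) = dFold x (l ++ [i]) D := by
      rw [dFold_append]; rfl
    rw [this, hD _ (by simp [hl])]
  | algebraMap c =>
    intro s D _ l _
    rw [delta_algebraMap, dFold_zero]
  | add g h _ _ ihg ihh =>
    intro s D hD l hl
    rw [delta_add', dFold_add, ihg s D hD l hl, ihh s D hD l hl, add_zero]
  | mul g h _ _ ihg ihh =>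
    intro s D hD l hl
    rw [delta_mul, dFold_add, dFold_commL, dFold_commR,
      ihg s D hD l hl, ihh s D hD l hl]
    simp

lemma isDiffLE_of_van (hx : Algebra.adjoin k (Set.range x) = ⊤) :
    ∀ (s : ℕ) (D : M →ₗ[k] N), Van x (s + 1) D → IsDiffLE (R := R) s D := by
  intro s
  induction s with
  | zero =>
    intro D hD f
    exact (van_zero_iff x _).1 (van_delta x hx f 0 D hD)
  | succ s ih =>
    intro D hD f
    exact ih _ (van_delta x hx f (s + 1) D hD)

lemma van_of_isDiffLE :
    ∀ (s : ℕ) (D : M →ₗ[k] N), IsDiffLE (R := R) s D → Van x (s + 1) D := by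
  intro s
  induction s with
  | zero =>
    intro D hD l hl
    match l, hl with
    | [i], _ => simpa using hD (x i)
  | succ s ih =>
    intro D hD l hl
    rcases List.eq_nil_or_concat l with rfl | ⟨t, b, rfl⟩
    · simp at hl
    · rw [List.concat_eq_append, dFold_append, dFold_cons, dFold_nil]
      exact ih _ (hD (x b)) t (by simpa using hl)

lemma sum_count_eq_length [DecidableEq (Fin n)] (l : List (Fin n)) :
    (∑ i, l.count i) = l.length := by
  induction l with
  | nil => simp
  | cons a t iht =>
    simp only [List.count_cons, List.length_cons]
    rw [Finset.sum_add_distrib, iht]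
    simp

lemma dFold_replicate (i : Fin n) (t : ℕ) (D : M →ₗ[k] N) :
    dFold x (List.replicate t i) D = (delta (x i))^[t] D := by
  induction t with
  | zero => rfl
  | succ t ih => rw [List.replicate_succ, dFold_cons, ih, Function.iterate_succ_apply']

lemma dFold_flatMap (m : Fin n → ℕ) (L : List (Fin n)) (D : M →ₗ[k] N) :
    L.foldr (fun i E => (delta (x i))^[m i] E) D
      = dFold x (L.flatMap fun i => List.replicate (m i) i) D := by
  induction L with
  | nil => rfl
  | cons a t ih =>
    rw [List.foldr_cons, ih, List.flatMap_cons, dFold_append, dFold_replicate]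

end Aux

/-- If `R` is generated by `x₁, …, xₙ` as a `k`-algebra, then `D` is a differential
operator of order at most `s` iff `δ(x₁)^{m₁} ∘ ⋯ ∘ δ(xₙ)^{mₙ} (D) = 0` for every
multi-index `m` with `|m| = s + 1`. -/
theorem stmt13 {k R M N : Type*} [Field k] [CommRing R] [Algebra k R]
    [AddCommGroup M] [Module k M] [Module R M] [IsScalarTower k R M]
    [AddCommGroup N] [Module k N] [Module R N] [IsScalarTower k R N]
    {n : ℕ} (x : Fin n → R) (hx : Algebra.adjoin k (Set.range x) = ⊤)
    (s : ℕ) (D : M →ₗ[k] N) :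
    IsDiffLE (R := R) s D
      ↔ ∀ m : Fin n → ℕ, (∑ i, m i) = s + 1 →
          (List.finRange n).foldr (fun i E => (delta (x i))^[m i] E) D = 0 := by
  constructor
  · intro hD m hm
    have hvan := van_of_isDiffLE x s D hD
    rw [dFold_flatMap]
    refine hvan _ ?_
    rw [List.length_flatMap, ← hm, Fin.sum_univ_def]
    simp [Function.comp_def]
  · intro h
    refine isDiffLE_of_van x hx s D ?_
    intro l hl
    classical
    set m : Fin n → ℕ := fun i => l.count i with hm
    have hsum : (∑ i, m i) = s + 1 := by
      rw [hm, sum_count_eq_length, hl]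
    have hperm : l.Perm ((List.finRange n).flatMap fun i => List.replicate (m i) i) := by
      rw [List.perm_iff_count]
      intro a
      rw [List.count_flatMap]
      have : ∀ i : Fin n, (List.count a ∘ fun i => List.replicate (m i) i) i
          = if i = a then m a else 0 := by
        intro i
        simp only [Function.comp_apply, List.count_replicate]
        split_ifs with h1 h2 h2 <;> simp_all [beq_iff_eq]
      rw [List.map_congr_left (fun i _ => this i)]
      rw [← Fin.sum_univ_def]
      simp [hm]
    rw [dFold_perm x hperm]
    rw [← dFold_flatMap]
    exact h m hsum
end
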